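/- Let Δ be a simplicial complex on [n], F an (n,k)-complex of Δ, and R an (n,k-1)-complex of Δ with |F_k| = |Δ_{k-1} \ R_{k-1}|. Write R̄ = Δ_{k-1} \ R_{k-1}, and let ∂_{R̄,F_k} be the square submatrix of the boundary matrix with rows R̄ and columns F_k. Then the following are equivalent: (1) det ∂_{R̄,F_k} ≠ 0; (2) |det ∂_{R̄,F_k}| = |H_{k-1}(F,R)| (the order of the finite relative homology group); (3) (F,R) is a rooted (n,k)-forest of Δ. -/

import Mathlib

open Finset

/-- Sign entry of the simplicial boundary matrix between faces `σ ⊆ τ` with `|σ|+1 = |τ|`. -/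
def bdE {n : ℕ} (σ τ : Finset (Fin n)) : ℤ :=
  if σ ⊆ τ ∧ σ.card + 1 = τ.card then
    ∑ a ∈ τ \ σ, (-1 : ℤ) ^ (τ.filter (fun b => b < a)).card
  else 0

/-- Faces of `X` of cardinality `c` (i.e. dimension `c-1`). -/
def cF {n : ℕ} (X : Finset (Finset (Fin n))) (c : ℕ) : Finset (Finset (Fin n)) :=
  X.filter (fun s => s.card = c)

/-- Relative faces of the pair `(X,Y)` of cardinality `c`. -/
def relF {n : ℕ} (X Y : Finset (Finset (Fin n))) (c : ℕ) : Finset (Finset (Fin n)) :=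
  (X \ Y).filter (fun s => s.card = c)

/-- Relative boundary matrix from cardinality level `c` to level `c-1`. -/
def dMat {n : ℕ} (X Y : Finset (Finset (Fin n))) (c : ℕ) :
    Matrix ↥(relF X Y (c - 1)) ↥(relF X Y c) ℤ :=
  Matrix.of fun σ τ => bdE σ.1 τ.1

/-- Relative boundary map (as a linear map on integer chains). -/
noncomputable def dLin {n : ℕ} (X Y : Finset (Finset (Fin n))) (c : ℕ) :
    (↥(relF X Y c) → ℤ) →ₗ[ℤ] (↥(relF X Y (c - 1)) → ℤ) :=
  Matrix.toLin' (dMat X Y c)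

/-- Relative simplicial homology of the pair `(X,Y)` at cardinality level `c`
(i.e. the homology group `H_{c-1}(X,Y)`; for `Y = ∅` this is reduced homology `H̃_{c-1}(X)`). -/
abbrev RelH {n : ℕ} (X Y : Finset (Finset (Fin n))) (c : ℕ) :=
  LinearMap.ker (dLin X Y c) ⧸
    Submodule.comap (LinearMap.ker (dLin X Y c)).subtype (LinearMap.range (dLin X Y (c + 1)))

/-- Relative boundary matrix over `ℚ`. -/
noncomputable def qMat {n : ℕ} (X Y : Finset (Finset (Fin n))) (c : ℕ) :
    Matrix ↥(relF X Y (c - 1)) ↥(relF X Y c) ℚ :=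
  (dMat X Y c).map fun z => (z : ℚ)

/-- Relative Betti number at cardinality level `c`, i.e. `β_{c-1}(X,Y)`. -/
noncomputable def bettiL {n : ℕ} (X Y : Finset (Finset (Fin n))) (c : ℕ) : ℕ :=
  ((relF X Y c).card - (qMat X Y c).rank) - (qMat X Y (c + 1)).rank

/-- An abstract simplicial complex (including the empty face). -/
def IsComplex {n : ℕ} (X : Finset (Finset (Fin n))) : Prop :=
  ∅ ∈ X ∧ ∀ s ∈ X, ∀ t ⊆ s, t ∈ X

/-- `X` is an `(n,k)`-complex of `Δ`: a complex with `K^{k-1} ∩ Δ ⊆ X ⊆ K^k ∩ Δ`. -/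
def KCplx {n : ℕ} (Δ : Finset (Finset (Fin n))) (k : ℕ) (X : Finset (Finset (Fin n))) : Prop :=
  IsComplex X ∧ Δ.filter (fun s => s.card ≤ k) ⊆ X ∧ X ⊆ Δ.filter (fun s => s.card ≤ k + 1)


-- injectivity of toLin' for det ≠ 0 over ℤ
lemma core_inj {ι : Type} [Fintype ι] [DecidableEq ι] (A : Matrix ι ι ℤ) (hA : A.det ≠ 0) :
    Function.Injective (Matrix.toLin' A) := by
  rw [← LinearMap.ker_eq_bot]
  rw [LinearMap.ker_eq_bot']
  intro x hx
  have h1 : A.adjugate.mulVec (A.mulVec x) = A.det • x := by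
    rw [Matrix.mulVec_mulVec, Matrix.adjugate_mul, Matrix.smul_mulVec, Matrix.one_mulVec]
  rw [Matrix.toLin'_apply] at hx
  rw [hx, Matrix.mulVec_zero] at h1
  funext i
  have := congrFun h1 i
  simp only [Pi.zero_apply, Pi.smul_apply, smul_eq_mul] at this ⊢
  rcases mul_eq_zero.mp this.symm with h | h
  · exact absurd h hA
  · exact h

lemma core_card {ι : Type} [Fintype ι] [DecidableEq ι] (A : Matrix ι ι ℤ) (hA : A.det ≠ 0) :
    Nat.card ((ι → ℤ) ⧸ LinearMap.range (Matrix.toLin' A)) = A.det.natAbs := by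
  classical
  set f := Matrix.toLin' A with hf
  set N := LinearMap.range f with hN
  have hinj : Function.Injective f := core_inj A hA
  let eN : (ι → ℤ) ≃ₗ[ℤ] N := LinearEquiv.ofInjective f hinj
  obtain ⟨m, snf⟩ := N.smithNormalForm (Pi.basisFun ℤ ι)
  have hm : m = Fintype.card ι := by
    have bN' : Module.Basis ι ℤ N := (Pi.basisFun ℤ ι).map eN
    have e2 := Module.Basis.indexEquiv snf.bN bN'
    simpa using Fintype.card_congr e2
  have hbij : Function.Bijective snf.f :=
    (Fintype.bijective_iff_injective_and_card snf.f).mpr ⟨snf.f.injective, by simp [hm]⟩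
  have hidx : N.toAddSubgroup.index = ∏ i, (snf.a i).natAbs := by
    rw [snf.toAddSubgroup_index_eq_pow_mul_prod]
    simp [hm, Int.index_zmultiples]
  let u : ι ≃ Fin m := (Fintype.equivFin ι).trans (finCongr hm.symm)
  let w : ι ≃ ι := u.trans (Equiv.ofBijective _ hbij)
  let g2 : (ι → ℤ) ≃ₗ[ℤ] N := snf.bM.equiv snf.bN u
  have hassoc : Associated (LinearMap.det ((N.subtype).comp (eN : (ι → ℤ) →ₗ[ℤ] N)))
      (LinearMap.det ((N.subtype).comp (g2 : (ι → ℤ) →ₗ[ℤ] N))) :=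
    LinearMap.associated_det_comp_equiv _ _ _
  have h1 : (N.subtype).comp (eN : (ι → ℤ) →ₗ[ℤ] N) = f := by ext x; rfl
  have hdetf : LinearMap.det f = A.det := LinearMap.det_toLin' A
  have h2 : LinearMap.det ((N.subtype).comp (g2 : (ι → ℤ) →ₗ[ℤ] N)) =
      ((Matrix.diagonal (snf.a ∘ u)).submatrix (⇑w.symm) id).det := by
    rw [← LinearMap.det_toMatrix snf.bM]
    congr 1
    ext j i
    rw [LinearMap.toMatrix_apply]
    have : ((N.subtype).comp (g2 : (ι → ℤ) →ₗ[ℤ] N)) (snf.bM i) = snf.a (u i) • snf.bM (snf.f (u i)) := by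
      simp only [LinearMap.comp_apply, Submodule.coe_subtype, LinearEquiv.coe_coe]
      show ((snf.bM.equiv snf.bN u) (snf.bM i) : ι → ℤ) = _
      rw [Module.Basis.equiv_apply]
      exact snf.snf (u i)
    rw [this]
    simp only [map_smul, Module.Basis.repr_self, Finsupp.smul_single, smul_eq_mul, mul_one,
      Matrix.submatrix_apply, id_eq]
    by_cases h : j = snf.f (u i)
    · have hw : w.symm j = i := by
        apply w.injective
        simp [h]
        show snf.f (u i) = w i
        rfl
      rw [hw, Matrix.diagonal_apply_eq]
      simp [h, Finsupp.single_apply]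
    · have hw : w.symm j ≠ i := by
        intro hc
        apply h
        have : w (w.symm j) = w i := by rw [hc]
        simp only [Equiv.apply_symm_apply] at this
        rw [this]; rfl
      rw [Matrix.diagonal_apply_ne _ hw]
      simp only [Finsupp.single_apply]
      rw [if_neg]
      intro hc; exact h hc.symm
  have hdet : A.det.natAbs = ∏ i, (snf.a i).natAbs := by
    have e1 : A.det.natAbs = (LinearMap.det ((N.subtype).comp (g2 : (ι → ℤ) →ₗ[ℤ] N))).natAbs := by
      rw [← hdetf, ← h1]
      exact Int.natAbs_eq_iff_associated.mpr hassoc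
    rw [e1, h2, Matrix.det_permute, Matrix.det_diagonal]
    rw [Int.natAbs_mul]
    have hp : ∏ i : ι, ((snf.a ∘ ⇑u) i).natAbs = ∏ i : Fin m, (snf.a i).natAbs :=
      Equiv.prod_comp u (fun j => (snf.a j).natAbs)
    have hpp : (∏ i : ι, (snf.a ∘ ⇑u) i).natAbs = ∏ i : Fin m, (snf.a i).natAbs := by
      exact (map_prod Int.natAbsHom (snf.a ∘ ⇑u) Finset.univ).trans hp
    rcases Int.units_eq_one_or (Equiv.Perm.sign w.symm) with h | h <;>
      rw [h] <;> simp <;> simpa using hpp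
  have hq : Nat.card ((ι → ℤ) ⧸ N) = N.toAddSubgroup.index :=
    (AddSubgroup.index_eq_card N.toAddSubgroup).symm
  rw [hq, hidx, hdet]

lemma core_rank {ι : Type} [Fintype ι] [DecidableEq ι] (B : Matrix ι ι ℚ) :
    B.det ≠ 0 ↔ B.rank = Fintype.card ι := by
  constructor
  · intro h
    exact Matrix.rank_of_isUnit B ((Matrix.isUnit_iff_isUnit_det B).mpr (isUnit_iff_ne_zero.mpr h))
  · intro h hdet
    obtain ⟨v, hv, hmul⟩ := (Matrix.exists_mulVec_eq_zero_iff).mpr hdet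
    have hsurj : Function.Surjective B.mulVecLin := by
      rw [← LinearMap.range_eq_top]
      apply Submodule.eq_top_of_finrank_eq
      rw [← Matrix.rank] at *
      rw [h, Module.finrank_fintype_fun_eq_card]
    have hinj : Function.Injective B.mulVecLin :=
      (LinearMap.injective_iff_surjective).mpr hsurj
    apply hv
    apply hinj
    simpa [Matrix.mulVecLin] using hmul

lemma core_fin {ι : Type} [Fintype ι] [DecidableEq ι] (A : Matrix ι ι ℤ) (hA : A.det ≠ 0) :
    Finite ((ι → ℤ) ⧸ LinearMap.range (Matrix.toLin' A)) := by
  have h := core_card A hA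
  have hne : A.det.natAbs ≠ 0 := Int.natAbs_ne_zero.mpr hA
  rw [← h] at hne
  exact (Nat.card_ne_zero.mp hne).2


lemma my_rank_submatrix {R : Type} [Field R] {m n m' n' : Type} [Fintype m] [Fintype n]
    [Fintype m'] [Fintype n'] [DecidableEq n] [DecidableEq n']
    (A : Matrix m n R) (e : m' ≃ m) (f : n' ≃ n) :
    (A.submatrix e f).rank = A.rank := by
  rw [Matrix.rank, Matrix.rank]
  have h : (A.submatrix ⇑e ⇑f).mulVecLin =
      (LinearEquiv.funCongrLeft R R e).toLinearMap ∘ₗ A.mulVecLin ∘ₗ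
        (LinearEquiv.funCongrLeft R R f.symm).toLinearMap := by
    apply LinearMap.ext; intro x
    funext i
    show (A.submatrix ⇑e ⇑f).mulVec x i = A.mulVec (fun j => x (f.symm j)) (e i)
    simp only [Matrix.mulVec, dotProduct, Matrix.submatrix_apply]
    refine Fintype.sum_equiv f _ _ fun j' => ?_
    rw [f.symm_apply_apply]
  rw [h, LinearMap.range_comp, LinearMap.range_comp, LinearEquiv.range, Submodule.map_top]
  exact LinearEquiv.finrank_map_eq (LinearEquiv.funCongrLeft R R e) _

/-- Determinant criterion for rooted forests: let `F` be an `(n,k)`-complex and `R` an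
`(n,k-1)`-complex of `Δ` with `|F_k| = |Δ_{k-1} \ R_{k-1}|`, and let `D` be the determinant
of the square submatrix of the boundary matrix with rows `R̄ = Δ_{k-1} \ R_{k-1}` and columns
`F_k` (with respect to any identification `e` of the two index sets; all the statements below
are independent of the choice).  Then the following are equivalent: (1) `D ≠ 0`;
(2) `H_{k-1}(F,R)` is finite of order `|D|`; (3) `(F,R)` is a rooted `(n,k)`-forest of `Δ`,
i.e. `β_{k-1}(F,R) = β_k(F,R) = 0`. -/
theorem stmt6 (n k : ℕ) (hk : 1 ≤ k) (Δ F R : Finset (Finset (Fin n)))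
    (hΔ : IsComplex Δ) (hF : KCplx Δ k F) (hR : KCplx Δ (k - 1) R)
    (hcard : (cF F (k + 1)).card = (relF Δ R k).card)
    (e : ↥(relF Δ R k) ≃ ↥(cF F (k + 1))) :
    ((Matrix.of fun (σ τ : ↥(relF Δ R k)) => bdE σ.1 (e τ).1).det ≠ 0 ↔
      (Finite (RelH F R k) ∧
        Nat.card (RelH F R k) =
          ((Matrix.of fun (σ τ : ↥(relF Δ R k)) => bdE σ.1 (e τ).1).det).natAbs)) ∧
    ((Matrix.of fun (σ τ : ↥(relF Δ R k)) => bdE σ.1 (e τ).1).det ≠ 0 ↔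
      (bettiL F R k = 0 ∧ bettiL F R (k + 1) = 0)) := by
  obtain ⟨hFc, hF1, hF2⟩ := hF
  obtain ⟨hRc, hR1, hR2⟩ := hR
  have hk1 : k - 1 + 1 = k := Nat.succ_pred_eq_of_pos hk
  have factA : relF F R (k - 1) = ∅ := by
    ext s
    simp only [relF, Finset.mem_filter, Finset.mem_sdiff, Finset.notMem_empty, iff_false]
    rintro ⟨⟨hsF, hsR⟩, hcards⟩
    apply hsR
    apply hR1
    have hsΔ : s ∈ Δ := (Finset.mem_filter.mp (hF2 hsF)).1
    exact Finset.mem_filter.mpr ⟨hsΔ, le_of_eq hcards⟩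
  have factB : relF F R k = relF Δ R k := by
    ext s
    simp only [relF, Finset.mem_filter, Finset.mem_sdiff]
    constructor
    · rintro ⟨⟨hsF, hsR⟩, hcards⟩
      exact ⟨⟨(Finset.mem_filter.mp (hF2 hsF)).1, hsR⟩, hcards⟩
    · rintro ⟨⟨hsΔ, hsR⟩, hcards⟩
      exact ⟨⟨hF1 (Finset.mem_filter.mpr ⟨hsΔ, le_of_eq hcards⟩), hsR⟩, hcards⟩
  have factC : relF F R (k + 1) = cF F (k + 1) := by
    ext s
    simp only [relF, cF, Finset.mem_filter, Finset.mem_sdiff]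
    constructor
    · rintro ⟨⟨hsF, _⟩, hcards⟩; exact ⟨hsF, hcards⟩
    · rintro ⟨hsF, hcards⟩
      refine ⟨⟨hsF, fun hsR => ?_⟩, hcards⟩
      have := (Finset.mem_filter.mp (hR2 hsR)).2
      rw [hk1] at this
      omega
  have factD : relF F R (k + 1 + 1) = ∅ := by
    ext s
    simp only [relF, Finset.mem_filter, Finset.mem_sdiff, Finset.notMem_empty, iff_false]
    rintro ⟨⟨hsF, _⟩, hcards⟩
    have := (Finset.mem_filter.mp (hF2 hsF)).2
    omega
  set M : Matrix (↥(relF Δ R k)) (↥(relF Δ R k)) ℤ :=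
    Matrix.of fun σ τ => bdE σ.1 (e τ).1 with hMdef
  let rE : ↥(relF F R k) ≃ ↥(relF Δ R k) := Equiv.subtypeEquivRight (fun x => by rw [factB])
  let cE : ↥(relF F R (k + 1)) ≃ ↥(cF F (k + 1)) := Equiv.subtypeEquivRight (fun x => by rw [factC])
  let g : ↥(relF F R (k + 1)) ≃ ↥(relF Δ R k) := cE.trans e.symm
  have hempty : IsEmpty ↥(relF F R (k - 1)) := Finset.isEmpty_coe_sort.mpr factA
  have hker : LinearMap.ker (dLin F R k) = ⊤ := by
    rw [LinearMap.ker_eq_top]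
    exact LinearMap.ext fun x => funext fun i => hempty.elim i
  have hegτ : ∀ τ : ↥(relF F R (k + 1)), e (g τ) = cE τ := fun τ => e.apply_symm_apply (cE τ)
  have hcomm : (LinearEquiv.funCongrLeft ℤ ℤ rE.symm).toLinearMap ∘ₗ (dLin F R (k + 1))
      = (Matrix.toLin' M) ∘ₗ (LinearEquiv.funCongrLeft ℤ ℤ g.symm).toLinearMap := by
    apply LinearMap.ext; intro x
    funext j
    show (Matrix.toLin' (dMat F R (k + 1))) x (rE.symm j)
      = (Matrix.toLin' M) (fun τ' => x (g.symm τ')) j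
    rw [Matrix.toLin'_apply, Matrix.toLin'_apply]
    simp only [Matrix.mulVec, dotProduct]
    refine Fintype.sum_equiv g _ _ fun τ => ?_
    have h1 : dMat F R (k + 1) (rE.symm j) τ = M j (g τ) := by
      show bdE (rE.symm j).1 τ.1 = bdE j.1 (e (g τ)).1
      rw [hegτ τ]
      rfl
    rw [h1, g.symm_apply_apply]
  have hrange : Submodule.map
      ((LinearEquiv.funCongrLeft ℤ ℤ rE.symm : (↥(relF F R k) → ℤ) ≃ₗ[ℤ] (↥(relF Δ R k) → ℤ)) :
        (↥(relF F R k) → ℤ) →ₗ[ℤ] (↥(relF Δ R k) → ℤ))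
      (LinearMap.range (dLin F R (k + 1))) = LinearMap.range (Matrix.toLin' M) := by
    have hre : Submodule.map
        ((LinearEquiv.funCongrLeft ℤ ℤ rE.symm : (↥(relF F R k) → ℤ) ≃ₗ[ℤ] (↥(relF Δ R k) → ℤ)) :
          (↥(relF F R k) → ℤ) →ₗ[ℤ] (↥(relF Δ R k) → ℤ))
        (LinearMap.range (dLin F R (k + 1)))
        = Submodule.map (LinearEquiv.funCongrLeft ℤ ℤ rE.symm).toLinearMap
          (LinearMap.range (dLin F R (k + 1))) := rfl
    rw [hre, ← LinearMap.range_comp, hcomm, LinearMap.range_comp, LinearEquiv.range,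
      Submodule.map_top]
  have hmap0 : (Submodule.comap (LinearMap.ker (dLin F R k)).subtype
        (LinearMap.range (dLin F R (k + 1)))).map
        ((LinearEquiv.ofTop _ hker : ↥(LinearMap.ker (dLin F R k)) ≃ₗ[ℤ] (↥(relF F R k) → ℤ)) :
          ↥(LinearMap.ker (dLin F R k)) →ₗ[ℤ] (↥(relF F R k) → ℤ))
      = LinearMap.range (dLin F R (k + 1)) := by
    ext x
    simp only [Submodule.mem_map, Submodule.mem_comap, Submodule.coe_subtype]
    constructor
    · rintro ⟨y, hy, rfl⟩
      simpa [LinearEquiv.ofTop_apply] using hy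
    · intro hx
      exact ⟨⟨x, hker ▸ Submodule.mem_top⟩, hx, rfl⟩
  let E : RelH F R k ≃ₗ[ℤ] ((↥(relF Δ R k) → ℤ) ⧸ LinearMap.range (Matrix.toLin' M)) :=
    (Submodule.Quotient.equiv _ _ (LinearEquiv.ofTop _ hker) hmap0).trans
      (Submodule.Quotient.equiv _ _ (LinearEquiv.funCongrLeft ℤ ℤ rE.symm) hrange)
  constructor
  · constructor
    · intro hdet
      have hfin := core_fin M hdet
      have hc := core_card M hdet
      refine ⟨Finite.of_equiv _ E.symm.toEquiv, ?_⟩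
      rw [Nat.card_congr E.toEquiv, hc]
    · rintro ⟨hfin, hcards⟩ hdet0
      rw [hdet0] at hcards
      simp only [Int.natAbs_zero] at hcards
      exact Nat.card_ne_zero.mpr ⟨⟨0⟩, hfin⟩ hcards
  · have hQ : qMat F R (k + 1) = ((M.map (fun z => (z : ℚ))).submatrix rE g) := by
      ext σ τ
      show ((dMat F R (k + 1)) σ τ : ℚ) = ((M (rE σ) (g τ) : ℤ) : ℚ)
      congr 1
      show bdE σ.1 τ.1 = bdE (rE σ).1 (e (g τ)).1
      rw [hegτ τ]
      rfl
    have hrk : (qMat F R (k + 1)).rank = (M.map (fun z => (z : ℚ))).rank := by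
      rw [hQ]
      exact my_rank_submatrix _ rE g
    have hrkle : (M.map (fun z => (z : ℚ))).rank ≤ (relF Δ R k).card := by
      simpa [Fintype.card_coe] using (M.map (fun z => (z : ℚ))).rank_le_card_height
    have hr0a : (qMat F R k).rank = 0 :=
      le_antisymm (by simpa [Fintype.card_coe, factA] using (qMat F R k).rank_le_card_height)
        (Nat.zero_le _)
    have hr0b : (qMat F R (k + 1 + 1)).rank = 0 :=
      le_antisymm
        (by simpa [Fintype.card_coe, factD] using (qMat F R (k + 1 + 1)).rank_le_card_width)
        (Nat.zero_le _)
    have hdq : (M.map (fun z => (z : ℚ))).det = ((M.det : ℤ) : ℚ) :=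
      (RingHom.map_det (Int.castRingHom ℚ) M).symm
    have hdetiff : M.det ≠ 0 ↔ (M.map (fun z => (z : ℚ))).rank = (relF Δ R k).card := by
      rw [← Fintype.card_coe, ← core_rank, hdq, Int.cast_ne_zero]
    constructor
    · intro hdet
      have hrank := hdetiff.mp hdet
      constructor
      · simp only [bettiL]
        rw [hr0a, hrk, hrank, factB]
        simp
      · simp only [bettiL]
        rw [hr0b, hrk, hrank, factC, hcard]
        simp
    · rintro ⟨hb1, hb2⟩
      apply hdetiff.mpr
      simp only [bettiL] at hb2
      rw [hr0b, hrk, factC, hcard] at hb2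
      omega
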